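/- Let α be a nonempty finite set. Consider the cochain complex of 𝔽₂-vector spaces G^k (k = 0, …, |α|), where G^k is the free 𝔽₂-vector space on the k-element subsets of α and the differential μ^k : G^k → G^{k+1} sends a k-subset S to the sum of all (k+1)-subsets containing S. Then this complex is exact: ker μ^k = im μ^{k−1} for all k (with μ^{−1} = 0 and, in degree 0, ker μ^0 = 0; in top degree, μ^{n−1} is surjective). -/

import Mathlib

open Finsupp Finset

section Aux

variable {α : Type*} [Fintype α] [DecidableEq α]

/-- Basis image of the differential, guarded by a `dite` on the cardinality. -/
noncomputable def ggAux (k : ℕ) (S : Finset α) (x : α) :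
    ({T : Finset α // T.card = k + 1} →₀ ZMod 2) :=
  if h : (insert x S).card = k + 1 then Finsupp.single ⟨insert x S, h⟩ 1 else 0

/-- The contracting homotopy: erase the fixed element `a` if present. -/
noncomputable def hAux (a : α) (k : ℕ) :
    ({S : Finset α // S.card = k + 1} →₀ ZMod 2) →ₗ[ZMod 2]
      ({S : Finset α // S.card = k} →₀ ZMod 2) :=
  Finsupp.linearCombination (ZMod 2) fun S : {S : Finset α // S.card = k + 1} =>
    if h : a ∈ S.1 then
      Finsupp.single ⟨S.1.erase a, by simp [Finset.card_erase_of_mem h, S.2]⟩ 1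
    else 0

lemma hAux_single (a : α) (k : ℕ) (T : {S : Finset α // S.card = k + 1}) :
    hAux a k (Finsupp.single T 1) =
      if h : a ∈ T.1 then
        Finsupp.single ⟨T.1.erase a, by simp [Finset.card_erase_of_mem h, T.2]⟩ 1
      else 0 := by
  simp [hAux, Finsupp.linearCombination_single]

lemma ggAux_of_mem {k : ℕ} {S : Finset α} {x : α} (hS : S.card = k) (hx : x ∈ S) :
    ggAux k S x = 0 := by
  unfold ggAux
  rw [dif_neg]
  rw [Finset.insert_eq_self.mpr hx, hS]
  omega

lemma ggAux_of_not_mem {k : ℕ} {S : Finset α} {x : α} (hS : S.card = k) (hx : x ∉ S) :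
    ggAux k S x = Finsupp.single
      ⟨insert x S, by rw [Finset.card_insert_of_notMem hx, hS]⟩ 1 := by
  unfold ggAux
  rw [dif_pos (by rw [Finset.card_insert_of_notMem hx, hS])]

lemma ggAux_congr {k : ℕ} {S T : Finset α} {x y : α} (e : insert x S = insert y T) :
    ggAux k S x = ggAux k T y := by
  unfold ggAux
  by_cases h : (insert x S).card = k + 1
  · rw [dif_pos h, dif_pos (e ▸ h)]
    exact congrArg (Finsupp.single · 1) (Subtype.ext e)
  · rw [dif_neg h, dif_neg (by rw [← e]; exact h)]

lemma add_self_zmod2 {ι : Type*} (v : ι →₀ ZMod 2) : v + v = 0 := by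
  rw [← two_smul (ZMod 2) v, show (2 : ZMod 2) = 0 by decide, zero_smul]

end Aux

section Mu

variable {α : Type*} [Fintype α] [DecidableEq α]
variable (μ : ∀ k : ℕ, ({S : Finset α // S.card = k} →₀ ZMod 2) →ₗ[ZMod 2]
      ({S : Finset α // S.card = k + 1} →₀ ZMod 2))
variable (hμ : ∀ (k : ℕ) (S : Finset α) (hS : S.card = k),
      μ k (Finsupp.single ⟨S, hS⟩ 1) =
        ∑ x ∈ Sᶜ.attach, Finsupp.single
          ⟨insert x.1 S, by
            rw [Finset.card_insert_of_notMem (Finset.mem_compl.mp x.2), hS]⟩ 1)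

include hμ

lemma mu_single (k : ℕ) (S : Finset α) (hS : S.card = k) :
    μ k (Finsupp.single ⟨S, hS⟩ 1) = ∑ x ∈ Sᶜ, ggAux k S x := by
  rw [hμ k S hS, ← Finset.sum_attach Sᶜ (ggAux k S)]
  refine Finset.sum_congr rfl fun x _ => ?_
  rw [ggAux_of_not_mem hS (Finset.mem_compl.mp x.2)]

/-- Case `a ∉ S` of the homotopy identity. -/
lemma hmu_of_not_mem (a : α) (k : ℕ) (S : Finset α) (hS : S.card = k) (ha : a ∉ S) :
    hAux a k (μ k (Finsupp.single ⟨S, hS⟩ 1)) = Finsupp.single ⟨S, hS⟩ 1 := by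
  rw [mu_single μ hμ k S hS, map_sum]
  rw [Finset.sum_eq_single_of_mem a (Finset.mem_compl.mpr ha)
    (fun x hx hxa => by
      rw [ggAux_of_not_mem hS (Finset.mem_compl.mp hx), hAux_single, dif_neg]
      simp only [Finset.mem_insert]
      push_neg
      exact ⟨fun h => hxa (h.symm), ha⟩)]
  rw [ggAux_of_not_mem hS ha, hAux_single, dif_pos (Finset.mem_insert_self a S)]
  exact congrArg (Finsupp.single · 1) (Subtype.ext (Finset.erase_insert ha))

/-- The homotopy identity `h ∘ μ + μ ∘ h = id` in positive degrees. -/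
lemma homotopy (a : α) (k : ℕ) (v : {S : Finset α // S.card = k + 1} →₀ ZMod 2) :
    hAux a (k + 1) (μ (k + 1) v) + μ k (hAux a k v) = v := by
  suffices h : (hAux a (k + 1)).comp (μ (k + 1)) + (μ k).comp (hAux a k) = LinearMap.id by
    have := LinearMap.congr_fun h v
    simpa using this
  refine Finsupp.lhom_ext' fun T => LinearMap.ext_ring ?_
  obtain ⟨S, hS⟩ := T
  simp only [LinearMap.comp_apply, LinearMap.add_apply, Finsupp.lsingle_apply,
    LinearMap.id_apply]
  by_cases ha : a ∈ S
  · -- main case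
    have hne : a ∉ Sᶜ := by simp [ha]
    have hE : (S.erase a).card = k := by simp [Finset.card_erase_of_mem ha, hS]
    -- second term
    rw [hAux_single, dif_pos ha]
    rw [mu_single μ hμ k (S.erase a) hE, Finset.compl_erase, Finset.sum_insert hne]
    have e1 : ggAux k (S.erase a) a = Finsupp.single ⟨S, hS⟩ 1 := by
      unfold ggAux
      rw [dif_pos (by rw [Finset.insert_erase ha, hS])]
      exact congrArg (Finsupp.single · 1) (Subtype.ext (Finset.insert_erase ha))
    rw [e1]
    -- first term
    rw [mu_single μ hμ (k + 1) S hS, map_sum]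
    have e2 : ∀ x ∈ Sᶜ, hAux a (k + 1) (ggAux (k + 1) S x) = ggAux k (S.erase a) x := by
      intro x hx
      have hxS : x ∉ S := Finset.mem_compl.mp hx
      have hxa : x ≠ a := fun h => hxS (h ▸ ha)
      rw [ggAux_of_not_mem hS hxS, hAux_single,
        dif_pos (Finset.mem_insert_of_mem ha),
        ggAux_of_not_mem hE (by simp [hxS] : x ∉ S.erase a)]
      exact congrArg (Finsupp.single · 1)
        (Subtype.ext (Finset.erase_insert_of_ne hxa))
    rw [Finset.sum_congr rfl e2]
    rw [add_left_comm, add_self_zmod2, add_zero]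
  · rw [hAux_single, dif_neg ha, map_zero, add_zero]
    exact hmu_of_not_mem μ hμ a (k + 1) S hS ha

/-- `μ ∘ μ = 0`. -/
lemma musq (k : ℕ) (v : {S : Finset α // S.card = k} →₀ ZMod 2) :
    μ (k + 1) (μ k v) = 0 := by
  suffices h : (μ (k + 1)).comp (μ k) = 0 by
    have := LinearMap.congr_fun h v
    simpa using this
  refine Finsupp.lhom_ext' fun T => LinearMap.ext_ring ?_
  obtain ⟨S, hS⟩ := T
  simp only [LinearMap.comp_apply, Finsupp.lsingle_apply, LinearMap.zero_apply,
    LinearMap.zero_comp]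
  rw [mu_single μ hμ k S hS]
  have e0 : ∑ x ∈ Sᶜ, ggAux k S x = ∑ x : α, ggAux k S x := by
    refine Finset.sum_subset (Finset.subset_univ _) fun x _ hx => ?_
    exact ggAux_of_mem hS (by simpa using hx)
  rw [e0, map_sum]
  have e1 : ∀ x : α, μ (k + 1) (ggAux k S x) =
      ∑ y : α, ggAux (k + 1) (insert x S) y := by
    intro x
    by_cases hx : x ∈ S
    · rw [ggAux_of_mem hS hx, map_zero]
      refine (Finset.sum_eq_zero fun y _ => ?_).symm
      unfold ggAux
      rw [dif_neg]
      have : (insert y (insert x S)).card ≤ k + 1 := by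
        rw [Finset.insert_eq_self.mpr hx]
        calc (insert y S).card ≤ S.card + 1 := Finset.card_insert_le _ _
        _ = k + 1 := by rw [hS]
      omega
    · have hc : (insert x S).card = k + 1 := by
        rw [Finset.card_insert_of_notMem hx, hS]
      rw [ggAux_of_not_mem hS hx]
      rw [mu_single μ hμ (k + 1) (insert x S) hc]
      refine Finset.sum_subset (Finset.subset_univ _) fun y _ hy => ?_
      exact ggAux_of_mem hc (Finset.notMem_compl.mp hy)
  rw [Finset.sum_congr rfl fun x _ => e1 x, ← Finset.sum_product']
  refine Finset.sum_ninvolution Prod.swap (fun p => ?_) (fun p hp => ?_)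
    (fun p => Finset.mem_univ _) (fun p => Prod.swap_swap p)
  · have : ggAux (k + 1) (insert p.1 S) p.2 = ggAux (k + 1) (insert p.2 S) p.1 :=
      ggAux_congr (Finset.insert_comm _ _ _)
    rw [Prod.fst_swap, Prod.snd_swap, ← this, add_self_zmod2]
  · intro hpp
    apply hp
    have hdiag : p.2 = p.1 := congrArg Prod.fst hpp
    rw [hdiag]
    unfold ggAux
    rw [dif_neg]
    have : (insert p.1 (insert p.1 S)).card ≤ k + 1 := by
      rw [Finset.insert_idem]
      calc (insert p.1 S).card ≤ S.card + 1 := Finset.card_insert_le _ _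
      _ = k + 1 := by rw [hS]
    omega

end Mu

/-- The subset-flip complex over `𝔽₂`: `G^k` is the free `𝔽₂`-vector space on the
`k`-element subsets of a nonempty finite set `α`, and `μ^k` sends a `k`-subset `S` to the
sum of all `(k+1)`-subsets containing `S`.  This complex is exact: `ker μ^{k+1} = im μ^k`
for all `k`, `ker μ^0 = 0`, and `μ^{n-1}` is surjective (`n = |α|`). -/
theorem flip_complex_exact {α : Type*} [Fintype α] [DecidableEq α] [Nonempty α]
    (μ : ∀ k : ℕ, ({S : Finset α // S.card = k} →₀ ZMod 2) →ₗ[ZMod 2]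
      ({S : Finset α // S.card = k + 1} →₀ ZMod 2))
    (hμ : ∀ (k : ℕ) (S : Finset α) (hS : S.card = k),
      μ k (Finsupp.single ⟨S, hS⟩ 1) =
        ∑ x ∈ Sᶜ.attach, Finsupp.single
          ⟨insert x.1 S, by
            rw [Finset.card_insert_of_notMem (Finset.mem_compl.mp x.2), hS]⟩ 1) :
    (∀ k : ℕ, LinearMap.ker (μ (k + 1)) = LinearMap.range (μ k)) ∧
      LinearMap.ker (μ 0) = ⊥ ∧
      LinearMap.range (μ (Fintype.card α - 1)) = ⊤ := by
  obtain ⟨a⟩ := ‹Nonempty α›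
  have hker : ∀ k : ℕ, LinearMap.ker (μ (k + 1)) = LinearMap.range (μ k) := by
    intro k
    apply le_antisymm
    · intro v hv
      rw [LinearMap.mem_ker] at hv
      refine ⟨hAux a k v, ?_⟩
      have h := homotopy μ hμ a k v
      rwa [hv, map_zero, zero_add] at h
    · rintro v ⟨w, rfl⟩
      rw [LinearMap.mem_ker]
      exact musq μ hμ k w
  refine ⟨hker, ?_, ?_⟩
  · rw [LinearMap.ker_eq_bot']
    intro v hv
    have h0 : (hAux a 0).comp (μ 0) = LinearMap.id := by
      refine Finsupp.lhom_ext' fun T => LinearMap.ext_ring ?_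
      obtain ⟨S, hS⟩ := T
      simp only [LinearMap.comp_apply, Finsupp.lsingle_apply, LinearMap.id_apply]
      exact hmu_of_not_mem μ hμ a 0 S hS
        (by rw [Finset.card_eq_zero.mp hS]; exact Finset.notMem_empty a)
    have := LinearMap.congr_fun h0 v
    simp only [LinearMap.comp_apply, LinearMap.id_apply] at this
    rw [hv, map_zero] at this
    exact this.symm
  · rw [← hker (Fintype.card α - 1), eq_top_iff]
    intro v _
    rw [LinearMap.mem_ker]
    have hn : Fintype.card α - 1 + 1 = Fintype.card α :=
      Nat.succ_pred_eq_of_pos Fintype.card_pos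
    have hz : μ (Fintype.card α - 1 + 1) = 0 := by
      refine Finsupp.lhom_ext' fun T => LinearMap.ext_ring ?_
      obtain ⟨S, hS⟩ := T
      simp only [LinearMap.comp_apply, Finsupp.lsingle_apply, LinearMap.zero_apply,
        LinearMap.zero_comp]
      rw [mu_single μ hμ _ S hS]
      have hSu : S = Finset.univ := (Finset.card_eq_iff_eq_univ S).mp (by rw [hS, hn])
      rw [hSu]
      simp
    rw [hz]
    rfl
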